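/- Let 0 < H < 1 and define the truncated Takagi–Landsberg function x_n^H(t) = Σ_{m=0}^{n−1} 2^{m(1/2−H)} Σ_{k=0}^{2^m−1} e_{m,k}(t) for n ≥ 1. Then the maximum of x_n^H over [0,1] equals M_n^H = 1/(3(1−2^{−H})) + (−1)^{n−1}/(3(2^{1−H}+1)·2^n) − 2^{−nH}/((1+2^{1−H})(2^H−1)), and it is attained exactly at the two points t_n^− = 2^{−n} J_n and t_n^+ = 1 − t_n^−, where J_n = (2^n − (−1)^n)/3 are the Jacobsthal numbers. -/

import Mathlib

open Filter Finset Set MeasureTheory ProbabilityTheory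

noncomputable def e00 (t : ℝ) : ℝ := max (min t (1 - t)) 0

noncomputable def fs (m : ℕ) (k : ℤ) (t : ℝ) : ℝ :=
  (2 : ℝ) ^ (-(m : ℝ) / 2) * e00 ((2 : ℝ) ^ m * t - (k : ℝ))

def IsSign (θ : ℕ → ℕ → ℝ) : Prop := ∀ m k, θ m k = 1 ∨ θ m k = -1

noncomputable def tlTerm (H : ℝ) (θ : ℕ → ℕ → ℝ) (m : ℕ) (t : ℝ) : ℝ :=
  (2 : ℝ) ^ ((m : ℝ) * (1 / 2 - H)) *
    ∑ k ∈ Finset.range (2 ^ m), θ m k * fs m (k : ℤ) t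

noncomputable def sPartial (H : ℝ) (θ : ℕ → ℕ → ℝ) (n : ℕ) (t : ℝ) : ℝ :=
  ∑ m ∈ Finset.range n, tlTerm H θ m t

def MemX (H : ℝ) (x : ℝ → ℝ) : Prop :=
  ∃ θ : ℕ → ℕ → ℝ, IsSign θ ∧ ∀ t : ℝ, x t = ∑' m : ℕ, tlTerm H θ m t

noncomputable def xTL (H : ℝ) (t : ℝ) : ℝ := ∑' m : ℕ, tlTerm H (fun _ _ => 1) m t

noncomputable def dyadicSum (p : ℝ) (x : ℝ → ℝ) (n : ℕ) (t : ℝ) : ℝ :=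
  ∑ k ∈ Finset.range (2 ^ n),
    if (k : ℝ) / 2 ^ n ≤ t then |x (((k : ℝ) + 1) / 2 ^ n) - x ((k : ℝ) / 2 ^ n)| ^ p else 0

noncomputable def nuFloor (h : ℝ) : ℤ := ⌊-(Real.logb 2 h)⌋

noncomputable def omegaH (H h : ℝ) : ℝ :=
  h * (2 : ℝ) ^ (((nuFloor h : ℝ) - 1) * (1 - H)) / ((2 : ℝ) ^ (1 - H) - 1) +
    (2 : ℝ) ^ ((1 - (nuFloor h : ℝ)) * H) / (3 * (1 - (2 : ℝ) ^ (-H)))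

lemma e00_of_nonpos {s : ℝ} (h : s ≤ 0) : e00 s = 0 := by
  unfold e00; rw [max_eq_right]; exact le_trans (min_le_left _ _) h
lemma e00_eval {s : ℝ} (h0 : 0 ≤ s) (h1 : s ≤ 1/2) : e00 s = s := by
  unfold e00; rw [min_eq_left (by linarith), max_eq_left h0]
lemma e00_sym (s : ℝ) : e00 (1 - s) = e00 s := by
  unfold e00; rw [min_comm]; ring_nf
lemma tlTerm_eq (H : ℝ) (m : ℕ) (t : ℝ) :
    tlTerm H (fun _ _ => 1) m t
      = (2:ℝ) ^ (-((m:ℝ) * H)) * ∑ k ∈ Finset.range (2 ^ m), e00 ((2:ℝ) ^ m * t - (k:ℝ)) := by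
  unfold tlTerm fs
  simp only [one_mul, Int.cast_natCast, ← Finset.mul_sum]
  rw [← mul_assoc, ← Real.rpow_add two_pos]
  ring_nf

-- symmetry
lemma sum_e00_reflect (m : ℕ) (t : ℝ) :
    ∑ k ∈ Finset.range (2 ^ m), e00 ((2:ℝ) ^ m * (1 - t) - (k:ℝ))
      = ∑ k ∈ Finset.range (2 ^ m), e00 ((2:ℝ) ^ m * t - (k:ℝ)) := by
  rw [← Finset.sum_range_reflect]
  refine Finset.sum_congr rfl fun k hk => ?_
  rw [Finset.mem_range] at hk
  have h1 : 1 ≤ 2 ^ m := Nat.one_le_two_pow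
  have hc : ((2 ^ m - 1 - k : ℕ) : ℝ) = (2:ℝ)^m - 1 - k := by
    push_cast [Nat.cast_sub (by omega : k ≤ 2^m - 1), Nat.cast_sub h1]
    ring
  rw [hc, show (2:ℝ) ^ m * (1 - t) - ((2:ℝ)^m - 1 - (k:ℝ)) = 1 - ((2:ℝ)^m * t - (k:ℝ)) by ring,
    e00_sym]

lemma sPartial_sym (H : ℝ) (n : ℕ) (t : ℝ) :
    sPartial H (fun _ _ => 1) n (1 - t) = sPartial H (fun _ _ => 1) n t := by
  unfold sPartial
  refine Finset.sum_congr rfl fun m _ => ?_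
  rw [tlTerm_eq, tlTerm_eq, sum_e00_reflect]

-- half recursion
lemma sPartial_half (H : ℝ) (n : ℕ) {t : ℝ} (h0 : 0 ≤ t) (h1 : t ≤ 1/2) :
    sPartial H (fun _ _ => 1) (n+1) t
      = t + (2:ℝ) ^ (-H) * sPartial H (fun _ _ => 1) n (2 * t) := by
  unfold sPartial
  rw [Finset.sum_range_succ']
  have h00 : tlTerm H (fun _ _ => 1) 0 t = t := by
    rw [tlTerm_eq]
    simp [e00_eval h0 h1]
  rw [h00, Finset.mul_sum, add_comm]
  congr 1
  refine Finset.sum_congr rfl fun m _ => ?_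
  rw [tlTerm_eq, tlTerm_eq]
  have hsub : ∑ k ∈ Finset.range (2 ^ (m+1)), e00 ((2:ℝ) ^ (m+1) * t - (k:ℝ))
      = ∑ k ∈ Finset.range (2 ^ m), e00 ((2:ℝ) ^ m * (2 * t) - (k:ℝ)) := by
    rw [← Finset.sum_subset (Finset.range_subset_range.2 (Nat.pow_le_pow_right (by norm_num) (Nat.le_succ m)))]
    · refine Finset.sum_congr rfl fun k _ => ?_
      congr 1; ring
    · intro k hk hk'
      rw [Finset.mem_range] at hk hk'
      push_neg at hk'
      apply e00_of_nonpos
      have hk2 : (2:ℝ)^m ≤ (k:ℝ) := by exact_mod_cast Nat.cast_le.2 hk'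
      have : (2:ℝ) ^ (m+1) * t ≤ (2:ℝ)^m := by
        rw [pow_succ]; nlinarith [pow_pos (by norm_num : (0:ℝ) < 2) m]
      linarith
  rw [hsub, show (2:ℝ) ^ (-((((m+1):ℕ):ℝ) * H)) = 2 ^ (-H) * 2 ^ (-((m:ℝ) * H)) by
    rw [← Real.rpow_add two_pos]; congr 1; push_cast; ring, mul_assoc]

noncomputable def aJ (n : ℕ) : ℝ := 1/3 - (-1)^n / (3 * 2^n)

noncomputable def Mrec (r : ℝ) : ℕ → ℝ
  | 0 => 0
  | n+1 => aJ (n+1) + r * Mrec r n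

lemma aJ_rec (n : ℕ) : aJ (n+1) = (1 - aJ n) / 2 := by
  have hp : (2:ℝ)^n ≠ 0 := by positivity
  unfold aJ
  field_simp
  ring

lemma aJ_one : aJ 1 = 1/2 := by norm_num [aJ]

lemma aJ_bounds : ∀ n, 1 ≤ n → 1/6 ≤ aJ n ∧ aJ n ≤ 1/2 := by
  intro n hn
  induction n, hn using Nat.le_induction with
  | base => rw [aJ_one]; norm_num
  | succ n hn ih =>
    rw [aJ_rec]
    constructor <;> linarith [ih.1, ih.2]

lemma aJ_eq (n : ℕ) : aJ n = ((2^n - (-1:ℝ)^n) / 3) / 2^n := by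
  have hp : (2:ℝ)^n ≠ 0 := by positivity
  unfold aJ; field_simp

lemma Mrec_eq (r : ℝ) (hr1 : r ≠ 1) (hr0 : 0 < r) : ∀ m : ℕ,
    Mrec r (m+1) = 1/(3*(1-r)) + (-1:ℝ)^m/(3*(2*r+1)*2^(m+1))
      - r^(m+2)/((1+2*r)*(1-r)) := by
  have h1 : (1:ℝ) - r ≠ 0 := fun h => hr1 (by linarith)
  have h2 : (2:ℝ)*r + 1 ≠ 0 := by linarith
  have h2' : (1:ℝ) + 2*r ≠ 0 := by linarith
  intro m
  induction m with
  | zero =>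
    show aJ 1 + r * 0 = _
    rw [aJ_one]
    field_simp
    ring
  | succ m ih =>
    show aJ (m+2) + r * Mrec r (m+1) = _
    rw [ih, aJ_rec, aJ_rec]
    have hp : (2:ℝ)^m ≠ 0 := by positivity
    unfold aJ
    field_simp
    ring

lemma main_ind {H : ℝ} (hH : H ∈ Set.Ioo (0:ℝ) 1) : ∀ n : ℕ,
    (∀ t : ℝ, 0 ≤ t → t ≤ 1/2 →
      sPartial H (fun _ _ => 1) (n+1) t ≤ Mrec ((2:ℝ)^(-H)) (n+1) ∧
      (sPartial H (fun _ _ => 1) (n+1) t = Mrec ((2:ℝ)^(-H)) (n+1) ↔ t = aJ (n+1))) ∧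
    (∀ v : ℝ, 0 ≤ v → v < aJ (n+1) →
      (aJ (n+1) - v) / (2 * (2:ℝ)^(-H)) <
        Mrec ((2:ℝ)^(-H)) (n+1) - sPartial H (fun _ _ => 1) (n+1) v) := by
  obtain ⟨hH0, hH1⟩ := hH
  set r := (2:ℝ)^(-H) with hrdef
  have hr0 : 0 < r := Real.rpow_pos_of_pos two_pos _
  have hrhalf : 1/2 < r := by
    have h := Real.rpow_lt_rpow_of_exponent_lt (by norm_num : (1:ℝ) < 2)
      (by linarith : -(1:ℝ) < -H)
    rw [Real.rpow_neg_one] at h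
    rw [hrdef]; linarith
  have hr1 : r < 1 := by
    have h := Real.rpow_lt_rpow_of_exponent_lt (by norm_num : (1:ℝ) < 2)
      (by linarith : -H < (0:ℝ))
    rw [Real.rpow_zero] at h
    rw [hrdef]; linarith
  -- symmetry helper
  have hsym : ∀ m : ℕ, ∀ v : ℝ, sPartial H (fun _ _ => 1) m v
      = sPartial H (fun _ _ => 1) m (1 - v) := by
    intro m v
    have h := sPartial_sym H m (1 - v)
    rw [show (1:ℝ) - (1 - v) = v by ring] at h
    exact h
  intro n
  induction n with
  | zero =>
    have hM : Mrec r 1 = 1/2 := by show aJ 1 + r * 0 = 1/2; rw [aJ_one]; ring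
    have hx : ∀ t : ℝ, 0 ≤ t → t ≤ 1/2 → sPartial H (fun _ _ => 1) 1 t = t := by
      intro t h0 h1
      rw [sPartial_half H 0 h0 h1]
      simp [sPartial]
    constructor
    · intro t h0 h1
      rw [hx t h0 h1, hM, aJ_one]
      exact ⟨h1, Iff.rfl⟩
    · intro v h0 hv
      rw [aJ_one] at hv
      rw [hx v h0 (by linarith), hM, aJ_one]
      have hpos : 0 < 1/2 - v := by linarith
      calc (1/2 - v) / (2*r) < (1/2 - v) := div_lt_self hpos (by linarith)
        _ = 1/2 - v := by ring
  | succ n ih =>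
    obtain ⟨ihP, ihK⟩ := ih
    set A := aJ (n+1) with hAdef
    set M' := Mrec r (n+1) with hMdef
    obtain ⟨hA16, hA12⟩ := aJ_bounds (n+1) (by omega)
    rw [← hAdef] at hA16 hA12
    have hU : ∀ v : ℝ, 0 ≤ v → v ≤ 1 → sPartial H (fun _ _ => 1) (n+1) v ≤ M' := by
      intro v h0 h1
      rcases le_or_gt v (1/2) with h | h
      · exact (ihP v h0 h).1
      · rw [hsym (n+1) v]
        exact (ihP (1-v) (by linarith) (by linarith)).1
    have hmarg : ∀ t : ℝ, 0 ≤ t → t ≤ 1/2 →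
        Mrec r (n+1+1) - sPartial H (fun _ _ => 1) (n+1+1) t
          = ((1 - 2*t) - A)/2 + r * (M' - sPartial H (fun _ _ => 1) (n+1) (1 - 2*t)) := by
      intro t h0 h1
      have hh := sPartial_half H (n+1) h0 h1
      rw [show (2:ℝ) * t = 1 - (1 - 2*t) by ring, ← hsym (n+1) (1 - 2*t)] at hh
      have hM2 : Mrec r (n+1+1) = aJ (n+1+1) + r * M' := rfl
      rw [hh, hM2, aJ_rec, ← hAdef]
      ring
    have haJ2 : aJ (n+1+1) = (1 - A)/2 := by rw [aJ_rec, ← hAdef]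
    constructor
    · intro t h0 h1
      have hv0 : (0:ℝ) ≤ 1 - 2*t := by linarith
      have hv1 : (1:ℝ) - 2*t ≤ 1 := by linarith
      have hm' : 0 ≤ M' - sPartial H (fun _ _ => 1) (n+1) (1 - 2*t) := by
        linarith [hU (1 - 2*t) hv0 hv1]
      have hmt := hmarg t h0 h1
      have hstrict : (1 - 2*t) ≠ A →
          0 < Mrec r (n+1+1) - sPartial H (fun _ _ => 1) (n+1+1) t := by
        intro hne
        rcases lt_or_gt_of_ne hne with hlt | hgt
        · have hK := ihK (1 - 2*t) hv0 hlt
          have h2 : (A - (1 - 2*t))/2 < r * (M' - sPartial H (fun _ _ => 1) (n+1) (1 - 2*t)) := by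
            have heq : (A - (1 - 2*t))/2 = r * ((A - (1 - 2*t))/(2*r)) := by
              field_simp
            rw [heq]
            exact mul_lt_mul_of_pos_left hK hr0
          rw [hmt]; linarith
        · rw [hmt]; nlinarith
      have hzero : 1 - 2*t = A →
          sPartial H (fun _ _ => 1) (n+1+1) t = Mrec r (n+1+1) := by
        intro he
        have hXA : sPartial H (fun _ _ => 1) (n+1) (1 - 2*t) = M' := by
          rw [he]; exact (ihP A (by linarith) hA12).2.mpr rfl
        rw [hXA, he] at hmt
        have : Mrec r (n+1+1) - sPartial H (fun _ _ => 1) (n+1+1) t = 0 := by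
          rw [hmt]; ring
        linarith
      constructor
      · rcases eq_or_ne (1 - 2*t) A with he | hne
        · exact le_of_eq (hzero he)
        · linarith [hstrict hne]
      · constructor
        · intro heq
          by_contra hne
          have hne' : (1 - 2*t) ≠ A := by
            intro hc
            exact hne (by rw [haJ2]; linarith)
          linarith [hstrict hne']
        · intro heq
          exact hzero (by rw [heq, haJ2]; ring)
    · intro v h0 hv
      obtain ⟨hB16, hB12⟩ := aJ_bounds (n+1+1) (by omega)
      have hv12 : v < 1/2 := lt_of_lt_of_le hv hB12
      have hw : A < 1 - 2*v := by
        rw [haJ2] at hv; linarith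
      have hw1 : 1 - 2*v ≤ 1 := by linarith
      have hmt := hmarg v h0 (le_of_lt hv12)
      have hm' : 0 ≤ M' - sPartial H (fun _ _ => 1) (n+1) (1 - 2*v) := by
        linarith [hU (1 - 2*v) (by linarith) hw1]
      have hgoal : (aJ (n+1+1) - v) = ((1 - 2*v) - A)/2 := by rw [haJ2]; ring
      rw [hgoal, hmt]
      have hpos : 0 < ((1 - 2*v) - A)/2 := by linarith
      calc ((1 - 2*v) - A)/2 / (2*r) < ((1 - 2*v) - A)/2 := div_lt_self hpos (by linarith)
        _ ≤ ((1 - 2*v) - A)/2 + r * (M' - sPartial H (fun _ _ => 1) (n+1) (1 - 2*v)) := by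
            nlinarith

lemma final {H : ℝ} (hH : H ∈ Set.Ioo (0:ℝ) 1) (m : ℕ) :
    IsGreatest (sPartial H (fun _ _ => 1) (m+1) '' Set.Icc 0 1)
      (1 / (3 * (1 - (2:ℝ)^(-H))) + (-1:ℝ)^(m+1-1) / (3 * ((2:ℝ)^(1-H) + 1) * 2^(m+1))
        - (2:ℝ)^(-((m+1:ℕ):ℝ)*H) / ((1 + (2:ℝ)^(1-H)) * ((2:ℝ)^H - 1))) ∧
    {t : ℝ | t ∈ Set.Icc (0:ℝ) 1 ∧ sPartial H (fun _ _ => 1) (m+1) t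
        = 1 / (3 * (1 - (2:ℝ)^(-H))) + (-1:ℝ)^(m+1-1) / (3 * ((2:ℝ)^(1-H) + 1) * 2^(m+1))
        - (2:ℝ)^(-((m+1:ℕ):ℝ)*H) / ((1 + (2:ℝ)^(1-H)) * ((2:ℝ)^H - 1))}
      = {((2^(m+1) - (-1:ℝ)^(m+1)) / 3) / 2^(m+1),
          1 - ((2^(m+1) - (-1:ℝ)^(m+1)) / 3) / 2^(m+1)} := by
  obtain ⟨hH0, hH1⟩ := hH
  set r := (2:ℝ)^(-H) with hrdef
  have hr0 : 0 < r := Real.rpow_pos_of_pos two_pos _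
  have hr1 : r < 1 := by
    have h := Real.rpow_lt_rpow_of_exponent_lt (by norm_num : (1:ℝ) < 2)
      (by linarith : -H < (0:ℝ))
    rw [Real.rpow_zero] at h
    rw [hrdef]; linarith
  have h1r : (1:ℝ) - r ≠ 0 := by linarith
  have h2a : (2:ℝ)^((1:ℝ)-H) = 2*r := by
    rw [show (1:ℝ)-H = 1 + (-H) by ring, Real.rpow_add two_pos, Real.rpow_one, hrdef]
  have h2b : (2:ℝ)^(H:ℝ) = r⁻¹ := by
    rw [show (H:ℝ) = -(-H) by ring, Real.rpow_neg (le_of_lt two_pos), hrdef]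
  have h2c : (2:ℝ)^(-((m+1:ℕ):ℝ)*H) = r^(m+1) := by
    rw [show -((m+1:ℕ):ℝ)*H = (-H)*((m+1:ℕ):ℝ) by ring,
      Real.rpow_mul (le_of_lt two_pos), Real.rpow_natCast, hrdef]
  -- the value M equals Mrec r (m+1)
  have hM : 1 / (3 * (1 - (2:ℝ)^(-H))) + (-1:ℝ)^(m+1-1) / (3 * ((2:ℝ)^(1-H) + 1) * 2^(m+1))
        - (2:ℝ)^(-((m+1:ℕ):ℝ)*H) / ((1 + (2:ℝ)^(1-H)) * ((2:ℝ)^H - 1))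
      = Mrec r (m+1) := by
    rw [Mrec_eq r (by linarith) hr0 m, h2a, h2b, h2c, ← hrdef, Nat.add_sub_cancel]
    have hrne : r ≠ 0 := ne_of_gt hr0
    have h12r : (1:ℝ) + 2*r ≠ 0 := by linarith
    have hinv : r⁻¹ - 1 = (1-r)/r := by field_simp
    rw [hinv]
    field_simp
    ring
  have htm : ((2^(m+1) - (-1:ℝ)^(m+1)) / 3) / 2^(m+1) = aJ (m+1) := (aJ_eq (m+1)).symm
  obtain ⟨hP, hK⟩ := main_ind ⟨hH0, hH1⟩ m
  rw [← hrdef] at hP hK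
  obtain ⟨hA16, hA12⟩ := aJ_bounds (m+1) (by omega)
  have hXA : sPartial H (fun _ _ => 1) (m+1) (aJ (m+1)) = Mrec r (m+1) :=
    (hP (aJ (m+1)) (by linarith) hA12).2.mpr rfl
  have hUB : ∀ t : ℝ, t ∈ Set.Icc (0:ℝ) 1 →
      sPartial H (fun _ _ => 1) (m+1) t ≤ Mrec r (m+1) := by
    rintro t ⟨ht0, ht1⟩
    rcases le_or_gt t (1/2) with h | h
    · exact (hP t ht0 h).1
    · calc sPartial H (fun _ _ => 1) (m+1) t
          = sPartial H (fun _ _ => 1) (m+1) (1 - t) := by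
            have := sPartial_sym H (m+1) (1 - t)
            rw [show (1:ℝ) - (1-t) = t by ring] at this
            exact this
        _ ≤ Mrec r (m+1) := (hP (1-t) (by linarith) (by linarith)).1
  rw [hM, htm]
  constructor
  · constructor
    · exact ⟨aJ (m+1), ⟨by linarith, by linarith⟩, hXA⟩
    · rintro y ⟨t, ht, rfl⟩
      exact hUB t ht
  · ext t
    simp only [Set.mem_setOf_eq, Set.mem_insert_iff, Set.mem_singleton_iff, Set.mem_Icc]
    constructor
    · rintro ⟨⟨ht0, ht1⟩, heq⟩
      rcases le_or_gt t (1/2) with h | h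
      · exact Or.inl ((hP t ht0 h).2.mp heq)
      · right
        have hs : sPartial H (fun _ _ => 1) (m+1) (1 - t) = Mrec r (m+1) := by
          have := sPartial_sym H (m+1) (1 - t)
          rw [show (1:ℝ) - (1-t) = t by ring] at this
          rw [← this]; exact heq
        have := (hP (1-t) (by linarith) (by linarith)).2.mp hs
        linarith
    · rintro (rfl | heq)
      · exact ⟨⟨by linarith, by linarith⟩, hXA⟩
      · have ht : t = 1 - aJ (m+1) := by linarith
        subst ht
        refine ⟨⟨by linarith, by linarith⟩, ?_⟩
        rw [sPartial_sym H (m+1) (aJ (m+1))]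
        exact hXA

theorem stmt4 (H : ℝ) (hH : H ∈ Set.Ioo (0:ℝ) 1) (n : ℕ) (hn : 1 ≤ n) :
    let xn : ℝ → ℝ := sPartial H (fun _ _ => 1) n
    let M : ℝ := 1 / (3 * (1 - (2:ℝ)^(-H))) + (-1:ℝ)^(n-1) / (3 * ((2:ℝ)^(1-H) + 1) * 2^n)
      - (2:ℝ)^(-(n:ℝ)*H) / ((1 + (2:ℝ)^(1-H)) * ((2:ℝ)^H - 1))
    let J : ℝ := (2^n - (-1:ℝ)^n) / 3
    let tm : ℝ := J / 2^n
    IsGreatest (xn '' Set.Icc 0 1) M ∧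
      {t : ℝ | t ∈ Set.Icc (0:ℝ) 1 ∧ xn t = M} = {tm, 1 - tm} := by
  obtain ⟨m, rfl⟩ : ∃ m, n = m + 1 := ⟨n - 1, (Nat.succ_pred_eq_of_pos hn).symm⟩
  exact final hH m
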